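/- arXiv:0811.3302 — 7 statements merged into one kernel-verified Lean document; each statement's English description precedes it below -/
import Mathlib

section
/- For each digit d ∈ {1,…,9}, the generalized Benford probability tends to the Benford probability as α → 1: the limit of ((d+1)^{1−α} − d^{1−α})/(10^{1−α} − 1) as α tends to 1 (with α ≠ 1) equals log₁₀(1 + 1/d). -/
open Real Filter Topology

lemma aux_deriv (b : ℝ) (hb : 0 < b) :
    HasDerivAt (fun α : ℝ => b ^ (1 - α)) (-Real.log b) 1 := by
  have h1 : HasDerivAt (fun α : ℝ => 1 - α) (-1) 1 := by
    simpa using (hasDerivAt_const (1:ℝ) (1:ℝ)).fun_sub (hasDerivAt_id 1)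
  have h2 := ((hasStrictDerivAt_const_rpow hb ((1:ℝ) - 1)).hasDerivAt).comp 1 h1
  simpa [Function.comp_def] using h2

/-- For each digit `d ∈ {1,…,9}`, the generalized Benford probability tends to
the Benford probability `log₁₀ (1 + 1/d)` as `α → 1` with `α ≠ 1`. -/
theorem gbl_tendsto_benford (d : ℕ) (hd : d ∈ Finset.Icc 1 9) :
    Tendsto (fun α : ℝ =>
        (((d : ℝ) + 1) ^ (1 - α) - (d : ℝ) ^ (1 - α)) / ((10 : ℝ) ^ (1 - α) - 1))
      (𝓝[≠] 1) (𝓝 (Real.logb 10 (1 + 1 / (d : ℝ)))) := by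
  simp only [Finset.mem_Icc] at hd
  have hd0 : (0:ℝ) < (d:ℝ) := by exact_mod_cast hd.1
  have hd1 : (0:ℝ) < (d:ℝ) + 1 := by linarith
  set f : ℝ → ℝ := fun α => ((d : ℝ) + 1) ^ (1 - α) - (d : ℝ) ^ (1 - α) with hf
  set g : ℝ → ℝ := fun α => (10 : ℝ) ^ (1 - α) - 1 with hg
  have hf1 : f 1 = 0 := by simp [hf]
  have hg1 : g 1 = 0 := by simp [hg]
  have hfd : HasDerivAt f (-Real.log ((d:ℝ)+1) - -Real.log (d:ℝ)) 1 :=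
    (aux_deriv _ hd1).sub (aux_deriv _ hd0)
  have hgd : HasDerivAt g (-Real.log 10) 1 := by
    exact (aux_deriv 10 (by norm_num)).sub_const (1:ℝ)
  have hfs := hasDerivAt_iff_tendsto_slope.mp hfd
  have hgs := hasDerivAt_iff_tendsto_slope.mp hgd
  have hlog10 : Real.log 10 ≠ 0 := by
    have := Real.log_pos (by norm_num : (1:ℝ) < 10); linarith
  have hdiv : Tendsto (fun α => slope f 1 α / slope g 1 α) (𝓝[≠] 1)
      (𝓝 ((-Real.log ((d:ℝ)+1) - -Real.log (d:ℝ)) / (-Real.log 10))) :=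
    hfs.div hgs (by simpa using hlog10)
  have heq : ∀ α ∈ ({(1:ℝ)}ᶜ : Set ℝ),
      slope f 1 α / slope g 1 α = f α / g α := by
    intro α hα
    have hα1 : α - 1 ≠ 0 := sub_ne_zero.mpr hα
    simp only [slope_def_field, hf1, hg1, sub_zero]
    rw [div_div_div_cancel_right₀]
    exact sub_ne_zero.mpr hα
  have := hdiv.congr' (eventually_nhdsWithin_of_forall heq)
  convert this using 2
  rw [Real.logb, show (1 + 1/(d:ℝ)) = ((d:ℝ)+1)/(d:ℝ) from by field_simp, Real.log_div hd1.ne' hd0.ne']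
  rw [div_neg]; ring
end

section
/- Let 0 ≤ α < 1 and D ∈ ℕ, and let T be a real random variable whose law has density f_T(t) = ((1−α)/(10^{(D+1)(1−α)} − 1)) · t^{−α} on [1, 10^{D+1}] (and 0 elsewhere) with respect to Lebesgue measure. Then for every digit d ∈ {1,…,9}, the probability that the first significant digit of T equals d is ((d+1)^{1−α} − d^{1−α})/(10^{1−α} − 1); that is, T follows the generalized Benford law with exponent α. -/
open Real MeasureTheory

lemma floor_logb_eq' (j : ℕ) (t : ℝ) (h1 : (10:ℝ)^j ≤ t) (h2 : t < (10:ℝ)^(j+1)) :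
    ⌊Real.logb 10 t⌋ = (j : ℤ) := by
  have ht : (0:ℝ) < t := lt_of_lt_of_le (by positivity) h1
  have hb : (1:ℝ) < 10 := by norm_num
  rw [Int.floor_eq_iff]
  constructor
  · rw [show ((j:ℤ):ℝ) = ((j:ℕ):ℝ) by push_cast; ring, Real.le_logb_iff_rpow_le hb ht,
      Real.rpow_natCast]
    exact h1
  · rw [show ((j:ℤ):ℝ) + 1 = ((j+1:ℕ):ℝ) by push_cast; ring, Real.logb_lt_iff_lt_rpow hb ht,
      Real.rpow_natCast]
    exact h2

lemma digit_set_eq (d : ℤ) (hd1 : 1 ≤ d) (hd9 : d ≤ 9) (D : ℕ) :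
    {t : ℝ | ⌊t / (10:ℝ) ^ (⌊Real.logb 10 t⌋)⌋ = d} ∩ Set.Ico 1 ((10:ℝ)^(D+1:ℕ)) =
      ⋃ j ∈ Finset.range (D+1), Set.Ico ((d:ℝ)*10^j) (((d:ℝ)+1)*10^j) := by
  ext t
  simp only [Set.mem_inter_iff, Set.mem_setOf_eq, Set.mem_Ico, Set.mem_iUnion,
    Finset.mem_range, exists_prop]
  constructor
  · rintro ⟨hg, h1, hM⟩
    have ht : (0:ℝ) < t := lt_of_lt_of_le one_pos h1
    have hb : (1:ℝ) < 10 := by norm_num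
    set k := ⌊Real.logb 10 t⌋ with hk
    have hk0 : 0 ≤ k := Int.floor_nonneg.2 (Real.logb_nonneg hb h1)
    have hkD : k ≤ D := by
      have : Real.logb 10 t < (D+1 : ℕ) := by
        rw [Real.logb_lt_iff_lt_rpow hb ht, Real.rpow_natCast]; exact hM
      have := (Int.floor_lt.2 (by exact_mod_cast this))
      omega
    refine ⟨k.toNat, by omega, ?_, ?_⟩
    · have h10k : (10:ℝ)^(k.toNat) = (10:ℝ)^k := by
        rw [← zpow_natCast, Int.toNat_of_nonneg hk0]
      have hle : ((d:ℝ)) ≤ t / (10:ℝ)^k := (Int.floor_eq_iff.1 hg).1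
      have hpos : (0:ℝ) < (10:ℝ)^k := by positivity
      rw [h10k]
      calc (d:ℝ) * (10:ℝ)^k ≤ (t / (10:ℝ)^k) * (10:ℝ)^k := by
            exact mul_le_mul_of_nonneg_right hle hpos.le
        _ = t := div_mul_cancel₀ t hpos.ne'
    · have h10k : (10:ℝ)^(k.toNat) = (10:ℝ)^k := by
        rw [← zpow_natCast, Int.toNat_of_nonneg hk0]
      have hlt : t / (10:ℝ)^k < (d:ℝ) + 1 := by
        have := (Int.floor_eq_iff.1 hg).2
        push_cast at this ⊢; linarith
      have hpos : (0:ℝ) < (10:ℝ)^k := by positivity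
      rw [h10k]
      calc t = (t / (10:ℝ)^k) * (10:ℝ)^k := (div_mul_cancel₀ t hpos.ne').symm
        _ < ((d:ℝ)+1) * (10:ℝ)^k := by exact mul_lt_mul_of_pos_right hlt hpos
  · rintro ⟨j, hj, ha, hb'⟩
    have hd1' : (1:ℝ) ≤ (d:ℝ) := by exact_mod_cast hd1
    have hd9' : (d:ℝ) ≤ 9 := by exact_mod_cast hd9
    have h10j : (0:ℝ) < (10:ℝ)^j := by positivity
    have h10j1 : (1:ℝ) ≤ (10:ℝ)^j := one_le_pow₀ (by norm_num)
    have h1 : (10:ℝ)^j ≤ t := le_trans (by nlinarith) ha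
    have h2 : t < (10:ℝ)^(j+1) := lt_of_lt_of_le hb' (by rw [pow_succ]; nlinarith)
    have hfl := floor_logb_eq' j t h1 h2
    have hfl10 : (10:ℝ) ^ (⌊Real.logb 10 t⌋) = (10:ℝ)^j := by
      rw [hfl, zpow_natCast]
    refine ⟨?_, le_trans (by nlinarith) ha, lt_of_lt_of_le h2 ?_⟩
    · rw [hfl10, Int.floor_eq_iff]
      constructor
      · rw [le_div_iff₀ h10j]; exact ha
      · rw [div_lt_iff₀ h10j]; linarith
    · exact pow_le_pow_right₀ (by norm_num) (by omega)

lemma lint_Ico (α c a b : ℝ) (hα₁ : α < 1) (hc : 0 ≤ c) (ha : 0 < a) (hab : a ≤ b) :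
    ∫⁻ t in Set.Ico a b, ENNReal.ofReal (c * t^(-α)) =
      ENNReal.ofReal (c/(1-α) * (b^(1-α) - a^(1-α))) := by
  rw [setLIntegral_congr Ico_ae_eq_Ioc]
  have hint : IntegrableOn (fun t : ℝ => c * t^(-α)) (Set.Ioc a b) := by
    have hco : ContinuousOn (fun t : ℝ => c * t^(-α)) (Set.Icc a b) :=
      continuousOn_const.mul (ContinuousOn.rpow_const continuousOn_id
        (fun x hx => Or.inl (ne_of_gt (lt_of_lt_of_le ha hx.1))))
    exact (hco.integrableOn_Icc).mono_set Set.Ioc_subset_Icc_self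
  have hnn : 0 ≤ᵐ[volume.restrict (Set.Ioc a b)] (fun t : ℝ => c * t^(-α)) := by
    filter_upwards [ae_restrict_mem measurableSet_Ioc] with t ht
    exact mul_nonneg hc (Real.rpow_nonneg (le_of_lt (ha.trans_le ht.1.le)) _)
  rw [← ofReal_integral_eq_lintegral_ofReal hint hnn]
  congr 1
  rw [← intervalIntegral.integral_of_le hab, intervalIntegral.integral_const_mul,
    integral_rpow (Or.inl (by linarith))]
  have h1 : -α + 1 = 1 - α := by ring
  rw [h1]
  have hne : 1 - α ≠ 0 := by linarith
  field_simp

/-- if `T` has density `((1-α)/(10^{(D+1)(1-α)} − 1))·t^{−α}` on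
`[1, 10^{D+1}]` (and `0` elsewhere) with `0 ≤ α < 1`, then the first significant digit of
`T` follows the generalized Benford law with exponent `α`. -/
theorem powerlaw_density_first_digit_gbl (α : ℝ) (hα₀ : 0 ≤ α) (hα₁ : α < 1) (D : ℕ)
    {Ω : Type*} [MeasurableSpace Ω] (ℙ : Measure Ω) [IsProbabilityMeasure ℙ]
    (T : Ω → ℝ) (hT : Measurable T)
    (hdens : Measure.map T ℙ =
      volume.withDensity (fun t =>
        ENNReal.ofReal
          (Set.indicator (Set.Icc (1 : ℝ) ((10 : ℝ) ^ (D + 1 : ℕ)))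
            (fun s => ((1 - α) / ((10 : ℝ) ^ (((D : ℝ) + 1) * (1 - α)) - 1)) * s ^ (-α)) t))) :
    ∀ d : ℤ, d ∈ Finset.Icc (1 : ℤ) 9 →
      ℙ {ω | ⌊T ω / (10 : ℝ) ^ (⌊Real.logb 10 (T ω)⌋)⌋ = d} =
        ENNReal.ofReal
          ((((d : ℝ) + 1) ^ (1 - α) - (d : ℝ) ^ (1 - α)) / ((10 : ℝ) ^ (1 - α) - 1)) := by
  intro d hd
  rw [Finset.mem_Icc] at hd
  obtain ⟨hd1, hd9⟩ := hd
  have hd1' : (1:ℝ) ≤ (d:ℝ) := by exact_mod_cast hd1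
  set M : ℝ := (10:ℝ)^(D+1:ℕ) with hM
  set c : ℝ := (1 - α) / ((10 : ℝ) ^ (((D : ℝ) + 1) * (1 - α)) - 1) with hc
  have h1α : (0:ℝ) < 1 - α := by linarith
  have hden : (1:ℝ) < (10 : ℝ) ^ (((D : ℝ) + 1) * (1 - α)) := by
    have hD : (0:ℝ) ≤ (D:ℝ) := Nat.cast_nonneg D
    exact Real.one_lt_rpow_iff_of_pos (by norm_num) |>.2 (Or.inl ⟨by norm_num, by nlinarith⟩)
  have hcpos : 0 ≤ c := by
    apply div_nonneg h1α.le; linarith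
  -- measurability
  have hlogb : Measurable fun t : ℝ => Real.logb 10 t := by
    simpa [Real.logb, div_eq_mul_inv] using Real.measurable_log.mul_const (Real.log 10)⁻¹
  have hpow : Measurable fun t : ℝ => (10:ℝ)^(⌊Real.logb 10 t⌋) :=
    (measurable_of_countable fun n : ℤ => (10:ℝ)^n).comp hlogb.floor
  have hg : Measurable fun t : ℝ => ⌊t / (10:ℝ)^(⌊Real.logb 10 t⌋)⌋ :=
    (measurable_id.div hpow).floor
  set S : Set ℝ := {t : ℝ | ⌊t / (10:ℝ) ^ (⌊Real.logb 10 t⌋)⌋ = d} with hSdef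
  have hS : MeasurableSet S := hg (measurableSet_singleton d)
  have hmap : ℙ {ω | ⌊T ω / (10 : ℝ) ^ (⌊Real.logb 10 (T ω)⌋)⌋ = d} = Measure.map T ℙ S := by
    rw [Measure.map_apply hT hS]; rfl
  rw [hmap, hdens, withDensity_apply _ hS]
  have hindic : (fun t => ENNReal.ofReal
      (Set.indicator (Set.Icc (1 : ℝ) M) (fun s => c * s ^ (-α)) t)) =
      fun t => Set.indicator (Set.Icc (1 : ℝ) M)
        (fun s => ENNReal.ofReal (c * s ^ (-α))) t := by
    funext t
    simp only [Set.indicator_apply]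
    split <;> simp
  rw [hindic]
  rw [setLIntegral_indicator measurableSet_Icc]
  set U : Set ℝ := ⋃ j ∈ Finset.range (D+1), Set.Ico ((d:ℝ)*10^j) (((d:ℝ)+1)*10^j) with hUdef
  have hU_eq : S ∩ Set.Ico 1 M = U := digit_set_eq d hd1 hd9 D
  have hae : (Set.Icc (1:ℝ) M ∩ S : Set ℝ) =ᵐ[volume] (U : Set ℝ) := by
    rw [MeasureTheory.ae_eq_set]
    constructor
    · refine measure_mono_null ?_ (measure_singleton M)
      rintro t ⟨⟨⟨ht1, htM⟩, htS⟩, htnU⟩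
      rcases lt_or_eq_of_le htM with h | h
      · exact absurd (hU_eq ▸ (⟨htS, ht1, h⟩ : t ∈ S ∩ Set.Ico 1 M) : t ∈ U) htnU
      · simp [h]
    · rw [Set.diff_eq_empty.2]
      · simp
      · rw [← hU_eq]
        exact fun t ⟨htS, ht1, htM⟩ => ⟨⟨ht1, htM.le⟩, htS⟩
  rw [setLIntegral_congr hae, hUdef]
  have hdisj : Set.PairwiseDisjoint (↑(Finset.range (D+1)))
      (fun j : ℕ => Set.Ico ((d:ℝ)*10^j) (((d:ℝ)+1)*10^j)) := by
    have key : ∀ i j : ℕ, i < j → ((d:ℝ)+1)*10^i ≤ (d:ℝ)*10^j := by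
      intro i j hij
      have h1 : (10:ℝ)^(i+1) ≤ 10^j := pow_le_pow_right₀ (by norm_num) hij
      rw [pow_succ] at h1
      nlinarith [pow_pos (show (0:ℝ)<10 by norm_num) i]
    intro i _ j _ hij
    rcases lt_or_gt_of_ne hij with h | h
    · apply Set.Ico_disjoint_Ico.2
      calc min (((d:ℝ)+1)*10^i) (((d:ℝ)+1)*10^j) ≤ ((d:ℝ)+1)*10^i := min_le_left _ _
        _ ≤ (d:ℝ)*10^j := key i j h
        _ ≤ max ((d:ℝ)*10^i) ((d:ℝ)*10^j) := le_max_right _ _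
    · apply Set.Ico_disjoint_Ico.2
      calc min (((d:ℝ)+1)*10^i) (((d:ℝ)+1)*10^j) ≤ ((d:ℝ)+1)*10^j := min_le_right _ _
        _ ≤ (d:ℝ)*10^i := key j i h
        _ ≤ max ((d:ℝ)*10^i) ((d:ℝ)*10^j) := le_max_left _ _
  rw [lintegral_biUnion_finset hdisj (fun j _ => measurableSet_Ico)]
  have hterm : ∀ j ∈ Finset.range (D+1),
      ∫⁻ t in Set.Ico ((d:ℝ)*10^j) (((d:ℝ)+1)*10^j), ENNReal.ofReal (c * t^(-α)) =
        ENNReal.ofReal (c/(1-α) * ((((d:ℝ)+1)*10^j)^(1-α) - ((d:ℝ)*10^j)^(1-α))) := by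
    intro j _
    apply lint_Ico α c _ _ hα₁ hcpos
    · positivity
    · nlinarith [pow_pos (show (0:ℝ)<10 by norm_num) j]
  rw [Finset.sum_congr rfl hterm]
  have hnn : ∀ j ∈ Finset.range (D+1),
      0 ≤ c/(1-α) * ((((d:ℝ)+1)*10^j)^(1-α) - ((d:ℝ)*10^j)^(1-α)) := by
    intro j _
    apply mul_nonneg (div_nonneg hcpos h1α.le)
    have h2 : ((d:ℝ)*10^j) ≤ ((d:ℝ)+1)*10^j := by
      nlinarith [pow_pos (show (0:ℝ)<10 by norm_num) j]
    have := Real.rpow_le_rpow (by positivity) h2 h1α.le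
    linarith
  rw [← ENNReal.ofReal_sum_of_nonneg hnn]
  congr 1
  have hx1 : (1:ℝ) < (10:ℝ)^(1-α) := by
    exact Real.one_lt_rpow_iff_of_pos (by norm_num) |>.2 (Or.inl ⟨by norm_num, h1α⟩)
  have hpowj : ∀ j : ℕ, ((10:ℝ)^j)^(1-α) = ((10:ℝ)^(1-α))^j := by
    intro j
    rw [← Real.rpow_natCast 10 j, ← Real.rpow_natCast ((10:ℝ)^(1-α)) j,
      ← Real.rpow_mul (by norm_num), ← Real.rpow_mul (by norm_num), mul_comm]
  have hsummand : ∀ j : ℕ,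
      c/(1-α) * ((((d:ℝ)+1)*10^j)^(1-α) - ((d:ℝ)*10^j)^(1-α)) =
        c/(1-α) * (((d:ℝ)+1)^(1-α) - (d:ℝ)^(1-α)) * ((10:ℝ)^(1-α))^j := by
    intro j
    rw [Real.mul_rpow (by linarith) (by positivity),
      Real.mul_rpow (by linarith) (by positivity), hpowj]
    ring
  rw [Finset.sum_congr rfl (fun j _ => hsummand j), ← Finset.mul_sum,
    geom_sum_eq hx1.ne']
  have hDsum : ((10:ℝ)^(1-α))^(D+1) = (10 : ℝ) ^ (((D : ℝ) + 1) * (1 - α)) := by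
    rw [← Real.rpow_natCast ((10:ℝ)^(1-α)) (D+1), ← Real.rpow_mul (by norm_num)]
    push_cast
    ring_nf
  rw [hDsum, hc]
  have hne1 : (10 : ℝ) ^ (((D : ℝ) + 1) * (1 - α)) - 1 ≠ 0 := by linarith
  have hne2 : (10:ℝ)^(1-α) - 1 ≠ 0 := by linarith
  field_simp
  exact mul_div_cancel_left₀ _ (by rwa [mul_comm (1 - α)])
end

section
/- Let 0 ≤ α < 1, D ∈ ℕ, and let T be a real random variable taking values in [1, 10^{D+1}) whose cumulative distribution function F_T is continuous with F_T(1) = 0. Define Z = ((T·10^{−⌊log₁₀ T⌋})^{1−α} − 1)/(10^{1−α} − 1). Then for every z ∈ [0,1], P(Z ≤ z) = ∑_{d=0}^{D} (F_T(v(z)·10^d) − F_T(10^d)), where v(z) = ((10^{1−α} − 1)·z + 1)^{1/(1−α)}. -/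
open Real MeasureTheory

private lemma decade_bounds10 {t : ℝ} (ht : 1 ≤ t) :
    (10:ℝ) ^ ⌊Real.logb 10 t⌋ ≤ t ∧ t < (10:ℝ) ^ (⌊Real.logb 10 t⌋ + 1) ∧
      0 ≤ ⌊Real.logb 10 t⌋ := by
  have ht0 : (0:ℝ) < t := by linarith
  have h10 : ((10:ℕ):ℝ) = (10:ℝ) := by norm_num
  have hfl : ⌊Real.logb 10 t⌋ = Int.log 10 t := by
    rw [← h10, Real.floor_logb_natCast ht0.le]
  refine ⟨?_, ?_, ?_⟩
  · rw [hfl, ← h10]; exact Int.zpow_log_le_self (by norm_num) ht0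
  · rw [hfl, ← h10]; exact Int.lt_zpow_succ_log_self (by norm_num) t
  · rw [hfl]
    have : ((10:ℕ):ℝ) ^ (0:ℤ) ≤ t := by simpa using ht
    exact (Int.zpow_le_iff_le_log (by norm_num) ht0).mp this

private lemma floor_logb_eq10 {t : ℝ} {d : ℤ} (h1 : (10:ℝ) ^ d ≤ t)
    (h2 : t < (10:ℝ) ^ (d + 1)) : ⌊Real.logb 10 t⌋ = d := by
  have ht0 : (0:ℝ) < t := lt_of_lt_of_le (by positivity) h1
  have h10 : ((10:ℕ):ℝ) = (10:ℝ) := by norm_num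
  rw [← h10] at h1 h2
  rw [← h10, Real.floor_logb_natCast ht0.le]
  have ha := (Int.zpow_le_iff_le_log (b := 10) (by norm_num) ht0).mp h1
  have hb := (Int.lt_zpow_iff_log_lt (b := 10) (by norm_num) ht0).mp h2
  omega

/-- for `T` taking values in `[1, 10^{D+1})` with continuous cumulative
distribution function `F_T` satisfying `F_T(1) = 0`, the candidate uniform variable
`Z = ((T·10^{−⌊log₁₀ T⌋})^{1−α} − 1)/(10^{1−α} − 1)` satisfies
`P(Z ≤ z) = ∑_{d=0}^{D} (F_T(v(z)·10^d) − F_T(10^d))` for all `z ∈ [0,1]`. -/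
theorem cdf_of_mantissa_variable (α : ℝ) (hα₀ : 0 ≤ α) (hα₁ : α < 1) (D : ℕ)
    {Ω : Type*} [MeasurableSpace Ω] (ℙ : Measure Ω) [IsProbabilityMeasure ℙ]
    (T : Ω → ℝ) (hT : Measurable T)
    (hrange : ∀ ω, T ω ∈ Set.Ico (1 : ℝ) ((10 : ℝ) ^ (D + 1 : ℕ)))
    (F : ℝ → ℝ) (hF : ∀ t, F t = (ℙ {ω | T ω ≤ t}).toReal)
    (hFcont : Continuous F) (hF1 : F 1 = 0) :
    ∀ z ∈ Set.Icc (0 : ℝ) 1,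
      (ℙ {ω | ((T ω * (10 : ℝ) ^ (-⌊Real.logb 10 (T ω)⌋)) ^ (1 - α) - 1) /
            ((10 : ℝ) ^ (1 - α) - 1) ≤ z}).toReal =
        ∑ d ∈ Finset.range (D + 1),
          (F ((((10 : ℝ) ^ (1 - α) - 1) * z + 1) ^ ((1 : ℝ) / (1 - α)) * (10 : ℝ) ^ d) -
            F ((10 : ℝ) ^ d)) := by
  intro z hz
  obtain ⟨hz0, hz1⟩ := hz
  have h1α : 0 < 1 - α := by linarith
  set c : ℝ := (10:ℝ) ^ (1 - α) - 1 with hc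
  have hc0 : 0 < c := by
    have h : (1:ℝ) < (10:ℝ) ^ (1 - α) := Real.one_lt_rpow (by norm_num) h1α
    simp only [hc]; linarith
  set v : ℝ := (c * z + 1) ^ ((1:ℝ) / (1 - α)) with hv
  have hcz1 : (1:ℝ) ≤ c * z + 1 := by nlinarith
  have hczpos : (0:ℝ) < c * z + 1 := by linarith
  have hv1 : 1 ≤ v := Real.one_le_rpow hcz1 (by positivity)
  have hvpow : v ^ (1 - α) = c * z + 1 := by
    rw [hv, ← Real.rpow_mul hczpos.le, one_div, inv_mul_cancel₀ h1α.ne', Real.rpow_one]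
  have hv10 : v ≤ 10 := by
    have h1 : c * z + 1 ≤ (10:ℝ) ^ (1 - α) := by nlinarith
    have h2 : v ≤ ((10:ℝ) ^ (1 - α)) ^ ((1:ℝ) / (1 - α)) :=
      Real.rpow_le_rpow hczpos.le h1 (by positivity)
    rwa [← Real.rpow_mul (by norm_num), mul_one_div, div_self h1α.ne', Real.rpow_one] at h2
  have hmeasIic : ∀ t : ℝ, MeasurableSet {ω | T ω ≤ t} := fun t => hT measurableSet_Iic
  -- every single point is null
  have hnull : ∀ t : ℝ, ℙ {ω | T ω = t} = 0 := by
    intro t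
    have key : ∀ n : ℕ, (ℙ {ω | T ω = t}).toReal ≤ F t - F (t - 1 / (n + 1)) := by
      intro n
      have hεpos : (0:ℝ) < 1 / (n + 1) := by positivity
      have hsub : {ω | T ω ≤ t - 1 / (n + 1)} ⊆ {ω | T ω ≤ t} := by
        intro ω h
        simp only [Set.mem_setOf_eq] at h ⊢
        linarith
      have hd : ℙ ({ω | T ω ≤ t} \ {ω | T ω ≤ t - 1 / (n + 1)})
          = ℙ {ω | T ω ≤ t} - ℙ {ω | T ω ≤ t - 1 / (n + 1)} :=
        measure_diff hsub (hmeasIic _).nullMeasurableSet (measure_ne_top _ _)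
      have hpt : {ω | T ω = t} ⊆ {ω | T ω ≤ t} \ {ω | T ω ≤ t - 1 / (n + 1)} := by
        intro ω hω
        simp only [Set.mem_setOf_eq] at hω
        refine ⟨le_of_eq hω, fun h => ?_⟩
        simp only [Set.mem_setOf_eq, hω] at h
        linarith
      calc (ℙ {ω | T ω = t}).toReal
          ≤ (ℙ ({ω | T ω ≤ t} \ {ω | T ω ≤ t - 1 / (n + 1)})).toReal :=
            ENNReal.toReal_mono (measure_ne_top _ _) (measure_mono hpt)
        _ = F t - F (t - 1 / (n + 1)) := by
            rw [hd, ENNReal.toReal_sub_of_le (measure_mono hsub) (measure_ne_top _ _),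
              hF, hF]
    have hlim : Filter.Tendsto (fun n : ℕ => F t - F (t - 1 / (n + 1)))
        Filter.atTop (nhds 0) := by
      have h1 : Filter.Tendsto (fun n : ℕ => t - 1 / (n + 1 : ℝ)) Filter.atTop (nhds t) := by
        have h := tendsto_one_div_add_atTop_nhds_zero_nat (𝕜 := ℝ)
        simpa using Filter.Tendsto.const_sub t h
      have h2 := (hFcont.tendsto t).comp h1
      have h3 := Filter.Tendsto.const_sub (F t) h2
      simpa [Function.comp] using h3
    have h0 : (ℙ {ω | T ω = t}).toReal ≤ 0 := ge_of_tendsto' hlim key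
    have h0' := le_antisymm h0 ENNReal.toReal_nonneg
    rw [ENNReal.toReal_eq_zero_iff] at h0'
    exact h0'.resolve_right (measure_ne_top _ _)
  -- the per-decade blocks
  set B : ℕ → Set Ω := fun d => {ω | T ω ≤ v * 10 ^ d} \ {ω | T ω ≤ 10 ^ d} with hB
  set N : Set Ω := ⋃ k : ℕ, {ω | T ω = (10:ℝ) ^ k} with hN
  have hN0 : ℙ N = 0 := measure_iUnion_null fun k => hnull _
  -- pointwise characterisation of the event
  have hchar : ∀ ω : Ω, (((T ω * (10:ℝ) ^ (-⌊Real.logb 10 (T ω)⌋)) ^ (1 - α) - 1) / c ≤ z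
      ↔ T ω ≤ v * (10:ℝ) ^ ⌊Real.logb 10 (T ω)⌋) := by
    intro ω
    obtain ⟨h1, h2, h3⟩ := decade_bounds10 (hrange ω).1
    set d := ⌊Real.logb 10 (T ω)⌋ with hd
    have hp : (0:ℝ) < (10:ℝ) ^ d := by positivity
    have hm1 : 1 ≤ T ω * (10:ℝ) ^ (-d) := by
      rw [zpow_neg, ← div_eq_mul_inv, le_div_iff₀ hp, one_mul]; exact h1
    constructor
    · intro h
      have h' : (T ω * (10:ℝ) ^ (-d)) ^ (1 - α) ≤ v ^ (1 - α) := by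
        rw [hvpow]
        rw [div_le_iff₀ hc0] at h
        linarith
      have hmv := (Real.rpow_le_rpow_iff (by linarith) (by linarith) h1α).mp h'
      have : T ω * (10:ℝ) ^ (-d) * (10:ℝ) ^ d ≤ v * (10:ℝ) ^ d :=
        mul_le_mul_of_nonneg_right hmv hp.le
      calc T ω = T ω * (10:ℝ) ^ (-d) * (10:ℝ) ^ d := by
            rw [mul_assoc, ← zpow_add₀ (by norm_num : (10:ℝ) ≠ 0)]
            simp
        _ ≤ v * (10:ℝ) ^ d := this
    · intro h
      have hm : T ω * (10:ℝ) ^ (-d) ≤ v := by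
        rw [zpow_neg, ← div_eq_mul_inv, div_le_iff₀ hp]; exact h
      have h' := Real.rpow_le_rpow (by linarith) hm h1α.le
      rw [hvpow] at h'
      rw [div_le_iff₀ hc0]; linarith
  have hd_le : ∀ ω, ⌊Real.logb 10 (T ω)⌋ ≤ (D : ℤ) := by
    intro ω
    obtain ⟨h1, h2⟩ := hrange ω
    have ht0 : (0:ℝ) < T ω := by linarith
    have h10 : ((10:ℕ):ℝ) = (10:ℝ) := by norm_num
    have h2' : T ω < ((10:ℕ):ℝ) ^ ((D:ℤ) + 1) := by
      rw [h10, show ((D:ℤ) + 1) = ((D + 1 : ℕ) : ℤ) by push_cast; ring, zpow_natCast]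
      exact h2
    have hlt := (Int.lt_zpow_iff_log_lt (b := 10) (by norm_num) ht0).mp h2'
    have hfl : ⌊Real.logb 10 (T ω)⌋ = Int.log 10 (T ω) := by
      rw [← h10, Real.floor_logb_natCast ht0.le]
    omega
  -- the two inclusions up to the null set N
  have hEsub : {ω | ((T ω * (10:ℝ) ^ (-⌊Real.logb 10 (T ω)⌋)) ^ (1 - α) - 1) / c ≤ z}
      ⊆ (⋃ d ∈ Finset.range (D + 1), B d) ∪ N := by
    intro ω hω
    rw [Set.mem_setOf_eq, hchar ω] at hω
    obtain ⟨h1, h2, h3⟩ := decade_bounds10 (hrange ω).1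
    set d := ⌊Real.logb 10 (T ω)⌋ with hd
    have hpow : (10:ℝ) ^ d.toNat = (10:ℝ) ^ d := by
      rw [← zpow_natCast (10:ℝ) d.toNat, Int.toNat_of_nonneg h3]
    rcases eq_or_lt_of_le h1 with heq | hlt
    · right
      rw [hN]
      exact Set.mem_iUnion.mpr ⟨d.toNat, by
        simp only [Set.mem_setOf_eq, hpow]; exact heq.symm⟩
    · left
      have hdD : d ≤ (D : ℤ) := by rw [hd]; exact hd_le ω
      have hmem : d.toNat ∈ Finset.range (D + 1) := Finset.mem_range.mpr (by omega)
      refine Set.mem_biUnion hmem ⟨?_, ?_⟩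
      · simp only [Set.mem_setOf_eq, hpow]; exact hω
      · simp only [Set.mem_setOf_eq, hpow, not_le]; exact hlt
  have hBsub : (⋃ d ∈ Finset.range (D + 1), B d)
      ⊆ {ω | ((T ω * (10:ℝ) ^ (-⌊Real.logb 10 (T ω)⌋)) ^ (1 - α) - 1) / c ≤ z} ∪ N := by
    intro ω hω
    obtain ⟨d, hdmem, hωd⟩ := Set.mem_iUnion₂.mp hω
    obtain ⟨hle, hnle⟩ := hωd
    simp only [Set.mem_setOf_eq] at hle
    simp only [Set.mem_setOf_eq, not_le] at hnle
    have hpd : (0:ℝ) < (10:ℝ) ^ d := by positivity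
    have hub : T ω ≤ (10:ℝ) ^ (d + 1) := by
      calc T ω ≤ v * 10 ^ d := hle
        _ ≤ 10 * 10 ^ d := mul_le_mul_of_nonneg_right hv10 hpd.le
        _ = 10 ^ (d + 1) := by ring
    rcases lt_or_eq_of_le hub with hlt | heq
    · left
      have hfl : ⌊Real.logb 10 (T ω)⌋ = (d : ℤ) := by
        apply floor_logb_eq10
        · rw [zpow_natCast]; exact hnle.le
        · rw [show ((d:ℤ) + 1) = ((d + 1 : ℕ) : ℤ) by push_cast; ring, zpow_natCast]
          exact hlt
      rw [Set.mem_setOf_eq, hchar ω, hfl, zpow_natCast]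
      exact hle
    · right
      rw [hN]
      exact Set.mem_iUnion.mpr ⟨d + 1, heq⟩
  -- disjointness
  have hBmeas : ∀ d : ℕ, MeasurableSet (B d) := fun d => (hmeasIic _).diff (hmeasIic _)
  have hdisj : (↑(Finset.range (D + 1)) : Set ℕ).PairwiseDisjoint B := by
    have key : ∀ i j : ℕ, i < j → Disjoint (B i) (B j) := by
      intro i j hij
      refine Set.disjoint_left.mpr ?_
      rintro ω ⟨h1, _⟩ ⟨_, h4⟩
      apply h4
      simp only [Set.mem_setOf_eq] at h1 ⊢
      have hvj : v * 10 ^ i ≤ (10:ℝ) ^ j := by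
        calc v * 10 ^ i ≤ 10 * 10 ^ i := mul_le_mul_of_nonneg_right hv10 (by positivity)
          _ = 10 ^ (i + 1) := by ring
          _ ≤ 10 ^ j := pow_le_pow_right₀ (by norm_num) hij
      linarith
    intro i _ j _ hij
    rcases lt_or_gt_of_ne hij with h | h
    · exact key i j h
    · exact (key j i h).symm
  -- measure of the event equals measure of the union
  have hEq : ℙ {ω | ((T ω * (10:ℝ) ^ (-⌊Real.logb 10 (T ω)⌋)) ^ (1 - α) - 1) / c ≤ z}
      = ℙ (⋃ d ∈ Finset.range (D + 1), B d) := by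
    apply le_antisymm
    · calc ℙ _ ≤ ℙ ((⋃ d ∈ Finset.range (D + 1), B d) ∪ N) := measure_mono hEsub
        _ ≤ ℙ (⋃ d ∈ Finset.range (D + 1), B d) + ℙ N := measure_union_le _ _
        _ = ℙ (⋃ d ∈ Finset.range (D + 1), B d) := by rw [hN0, add_zero]
    · calc ℙ (⋃ d ∈ Finset.range (D + 1), B d)
          ≤ ℙ ({ω | ((T ω * (10:ℝ) ^ (-⌊Real.logb 10 (T ω)⌋)) ^ (1 - α) - 1) / c ≤ z} ∪ N) :=
            measure_mono hBsub
        _ ≤ ℙ {ω | ((T ω * (10:ℝ) ^ (-⌊Real.logb 10 (T ω)⌋)) ^ (1 - α) - 1) / c ≤ z} + ℙ N :=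
            measure_union_le _ _
        _ = ℙ {ω | ((T ω * (10:ℝ) ^ (-⌊Real.logb 10 (T ω)⌋)) ^ (1 - α) - 1) / c ≤ z} := by
            rw [hN0, add_zero]
  rw [hEq, measure_biUnion_finset hdisj (fun d _ => hBmeas d),
    ENNReal.toReal_sum (fun d _ => measure_ne_top _ _)]
  refine Finset.sum_congr rfl fun d _ => ?_
  have hsub : {ω | T ω ≤ (10:ℝ) ^ d} ⊆ {ω | T ω ≤ v * 10 ^ d} := by
    intro ω h
    simp only [Set.mem_setOf_eq] at h ⊢
    have : (10:ℝ) ^ d ≤ v * 10 ^ d := le_mul_of_one_le_left (by positivity) hv1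
    linarith
  simp only [hB]
  rw [measure_diff hsub (hmeasIic _).nullMeasurableSet (measure_ne_top _ _),
    ENNReal.toReal_sub_of_le (measure_mono hsub) (measure_ne_top _ _), hF, hF]
end

section
/- Fix a real number a and define, for real N large enough that log N > a + 1, the counting function L(N) = e·α(N)·∫_2^N x^{−α(N)} dx with α(N) = 1/(log N − a). Then L satisfies the prime number theorem normalization: L(N)·log N / N → 1 as N → ∞. -/
open Real Filter Topology

/-- the counting function `L(N) = e·α(N)·∫_2^N x^{−α(N)} dx`, with
`α(N) = 1/(log N − a)`, satisfies the prime number theorem normalization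
`L(N)·log N / N → 1` as `N → ∞`. -/
theorem L_satisfies_PNT (a : ℝ) :
    Tendsto (fun N : ℝ =>
        (Real.exp 1 * (1 / (Real.log N - a)) *
            ∫ x in (2 : ℝ)..N, x ^ (-(1 / (Real.log N - a)))) * Real.log N / N)
      atTop (𝓝 1) := by
  have hlog : Tendsto (fun N : ℝ => Real.log N - a) atTop atTop := by
    simpa [sub_eq_add_neg] using tendsto_atTop_add_const_right atTop (-a) Real.tendsto_log_atTop
  have hα : Tendsto (fun N : ℝ => 1 / (Real.log N - a)) atTop (𝓝 0) := by
    simp only [one_div]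
    exact hlog.inv_tendsto_atTop
  have hne : ∀ᶠ N : ℝ in atTop, 1 < Real.log N - a := hlog.eventually_gt_atTop 1
  have hN2 : ∀ᶠ N : ℝ in atTop, (2:ℝ) ≤ N := eventually_ge_atTop 2
  -- log N / (log N - a) → 1
  have hr : Tendsto (fun N : ℝ => Real.log N / (Real.log N - a)) atTop (𝓝 1) := by
    have h1 : Tendsto (fun N : ℝ => 1 + a * (1 / (Real.log N - a))) atTop (𝓝 (1 + a * 0)) :=
      tendsto_const_nhds.add (tendsto_const_nhds.mul hα)
    rw [show (1:ℝ) + a * 0 = 1 by ring] at h1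
    apply Tendsto.congr' _ h1
    filter_upwards [hne] with N h
    have hs : Real.log N - a ≠ 0 := by linarith
    field_simp
    ring
  -- factor A
  have hA : Tendsto (fun N : ℝ => 1 / (Real.log N - a) * Real.log N / (1 - 1 / (Real.log N - a)))
      atTop (𝓝 1) := by
    have h1 : Tendsto (fun N : ℝ => (Real.log N / (Real.log N - a)) / (1 - 1 / (Real.log N - a)))
        atTop (𝓝 (1 / (1 - 0))) := hr.div (tendsto_const_nhds.sub hα) (by norm_num)
    rw [show (1:ℝ) / (1 - 0) = 1 by norm_num] at h1
    apply Tendsto.congr' _ h1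
    filter_upwards with N
    rw [one_div_mul_eq_div]
  -- factor B
  have hB : Tendsto (fun N : ℝ => Real.exp 1 * N ^ (-(1 / (Real.log N - a)))) atTop (𝓝 1) := by
    have h1 : Tendsto (fun N : ℝ => Real.exp (1 - Real.log N / (Real.log N - a))) atTop
        (𝓝 (Real.exp (1 - 1))) :=
      (Real.continuous_exp.tendsto _).comp (tendsto_const_nhds.sub hr)
    rw [show Real.exp (1 - 1) = 1 by rw [sub_self, Real.exp_zero]] at h1
    apply Tendsto.congr' _ h1
    filter_upwards [hN2] with N h2
    have hN0 : (0:ℝ) < N := by linarith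
    rw [Real.rpow_def_of_pos hN0, ← Real.exp_add]
    congr 1
    ring
  -- factor C
  have hC : Tendsto (fun N : ℝ => Real.exp 1 * (2:ℝ) ^ (1 - 1 / (Real.log N - a)) / N)
      atTop (𝓝 0) := by
    have h1 : Tendsto (fun N : ℝ => Real.exp 1 * (2:ℝ) ^ (1 - 1 / (Real.log N - a))) atTop
        (𝓝 (Real.exp 1 * (2:ℝ) ^ (1 - (0:ℝ)))) := by
      have hc : Continuous (fun t : ℝ => Real.exp 1 * (2:ℝ) ^ (1 - t)) := by
        have hc2 : Continuous (fun t : ℝ => Real.exp 1 * Real.exp (Real.log 2 * (1 - t))) := by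
          continuity
        apply hc2.congr
        intro t
        rw [Real.rpow_def_of_pos (by norm_num : (0:ℝ) < 2)]
      exact (hc.tendsto 0).comp hα
    exact h1.div_atTop tendsto_id
  have hmain : Tendsto (fun N : ℝ =>
      (1 / (Real.log N - a) * Real.log N / (1 - 1 / (Real.log N - a))) *
        (Real.exp 1 * N ^ (-(1 / (Real.log N - a))) -
          Real.exp 1 * (2:ℝ) ^ (1 - 1 / (Real.log N - a)) / N)) atTop (𝓝 (1 * (1 - 0))) :=
    hA.mul (hB.sub hC)
  rw [show (1:ℝ) * (1 - 0) = 1 by ring] at hmain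
  apply Tendsto.congr' _ hmain
  filter_upwards [hne, hN2] with N h1 h2
  have hN0 : (0:ℝ) < N := by linarith
  set α : ℝ := 1 / (Real.log N - a) with hαdef
  have hα0 : 0 < α := by positivity
  have hα1 : α < 1 := by
    rw [hαdef, div_lt_one (by linarith)]
    linarith
  have hint : (∫ x in (2:ℝ)..N, x ^ (-α)) = (N ^ (-α + 1) - (2:ℝ) ^ (-α + 1)) / (-α + 1) :=
    integral_rpow (Or.inl (by linarith : (-1:ℝ) < -α))
  rw [show -α + 1 = 1 - α by ring] at hint
  rw [hint]
  have hNne : N ≠ 0 := ne_of_gt hN0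
  have hsplit : N ^ (1 - α) = N ^ (-α) * N := by
    rw [← Real.rpow_add_one hNne (-α)]
    congr 1
    ring
  rw [hsplit]
  have h1α : (1:ℝ) - α ≠ 0 := by linarith
  clear hint hαdef
  generalize (2:ℝ) ^ (1 - α) = Q
  generalize N ^ (-α) = P
  clear_value α
  field_simp
end

section
/- Fix a real number a and define L(N) = e·α(N)·∫_2^N x^{−α(N)} dx with α(N) = 1/(log N − a). Then L admits the asymptotic expansion L(N) = N/log N + N/(log N)² + (1 + a − a²/2)·N/(log N)³ + O(N/(log N)⁴) as N → ∞; i.e., the difference L(N) − N/log N − N/(log N)² − (1 + a − a²/2)·N/(log N)³ is O(N/(log N)⁴). -/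
open Real Filter Topology Asymptotics

private lemma tendsto_div_sub (b : ℝ) :
    Tendsto (fun x : ℝ => x / (x - b)) atTop (𝓝 1) := by
  have h0 : Tendsto (fun x : ℝ => 1 - b / x) atTop (𝓝 1) := by
    have hb : Tendsto (fun x : ℝ => b / x) atTop (𝓝 0) :=
      Tendsto.div_atTop tendsto_const_nhds tendsto_id
    simpa using tendsto_const_nhds.sub hb
  have h : Tendsto (fun x : ℝ => (1 - b / x)⁻¹) atTop (𝓝 1) := by
    simpa using h0.inv₀ one_ne_zero
  refine h.congr' ?_
  filter_upwards [eventually_gt_atTop 0, eventually_gt_atTop b] with x hx hxb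
  have h1 : x ≠ 0 := hx.ne'
  have h2 : x - b ≠ 0 := by linarith [sub_pos.mpr hxb]
  field_simp

private lemma key_bigO (a : ℝ) :
    (fun x : ℝ => Real.exp (-(a / (x - a))) / (x - a - 1)
        - 1 / x - 1 / x ^ 2 - (1 + a - a ^ 2 / 2) / x ^ 3)
      =O[atTop] (fun x : ℝ => 1 / x ^ 4) := by
  set c : ℝ := 1 + a - a ^ 2 / 2 with hc
  set p2 : ℝ := 1 + 2*a + a^2/2 - a^3/2 with hp2
  set p1 : ℝ := 3*a^4/2 - a^3 - 4*a^2 - 2*a with hp1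
  set p0 : ℝ := -a^5/2 + a^4/2 + 2*a^3 + a^2 with hp0
  -- the ratio x⁴/((x-a)³(x-a-1)) tends to 1
  have hrat3 : Tendsto (fun x : ℝ => (x/(x-a))^3 * (x/(x-a-1))) atTop (𝓝 1) := by
    have h1 := (tendsto_div_sub a).pow 3
    have h2 : Tendsto (fun x : ℝ => x / (x - a - 1)) atTop (𝓝 1) := by
      have := tendsto_div_sub (a + 1)
      simpa [sub_sub] using this
    simpa using h1.mul h2
  have hrat2 : Tendsto (fun x : ℝ => (x/(x-a))^2 * (x/(x-a-1))) atTop (𝓝 1) := by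
    have h1 := (tendsto_div_sub a).pow 2
    have h2 : Tendsto (fun x : ℝ => x / (x - a - 1)) atTop (𝓝 1) := by
      have := tendsto_div_sub (a + 1)
      simpa [sub_sub] using this
    simpa using h1.mul h2
  -- exp remainder part is O(1) after multiplying by x^4
  have hA : (fun x : ℝ => x^4 *
      ((Real.exp (-(a/(x-a))) - (1 - a/(x-a) + (a/(x-a))^2/2)) / (x-a-1)))
      =O[atTop] (fun _ : ℝ => (1:ℝ)) := by
    refine isBigO_iff.2 ⟨2/9 * |a|^3 * 2, ?_⟩
    filter_upwards [eventually_ge_atTop (|a| + a), eventually_ge_atTop (a + 2),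
      eventually_ge_atTop 1, hrat3.eventually_le_const (by norm_num : (1:ℝ) < 2)]
      with x hx1 hx2 hx3 hx4
    have hxa : (1:ℝ) ≤ x - a := by linarith
    have hxa1 : (1:ℝ) ≤ x - a - 1 := by linarith
    have hs : |(-(a/(x-a)))| ≤ 1 := by
      rw [abs_neg, abs_div, abs_of_pos (by linarith : (0:ℝ) < x - a)]
      rw [div_le_one (by linarith)]
      linarith
    have hE := Real.exp_bound hs (n := 3) (by norm_num)
    have hsum : ∑ m ∈ Finset.range 3, (-(a/(x-a))) ^ m / m.factorial
        = 1 - a/(x-a) + (a/(x-a))^2/2 := by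
      simp [Finset.sum_range_succ]
      ring
    rw [hsum] at hE
    have hE' : |Real.exp (-(a/(x-a))) - (1 - a/(x-a) + (a/(x-a))^2/2)|
        ≤ 2/9 * (|a|/(x-a))^3 := by
      have : |(-(a/(x-a)))| ^ 3 * ((3:ℕ).succ / ((3:ℕ).factorial * 3))
          = 2/9 * (|a|/(x-a))^3 := by
        rw [abs_neg, abs_div, abs_of_pos (by linarith : (0:ℝ) < x - a)]
        norm_num [Nat.factorial]
        ring
      linarith [hE, this ▸ hE]
    have hx0 : (0:ℝ) < x := by linarith
    simp only [Real.norm_eq_abs]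
    rw [abs_mul, abs_div]
    rw [abs_of_nonneg (by positivity : (0:ℝ) ≤ x^4),
        abs_of_pos (by linarith : (0:ℝ) < x - a - 1)]
    have hratval : x^4 / ((x-a)^3 * (x-a-1)) ≤ 2 := by
      have : (x/(x-a))^3 * (x/(x-a-1)) = x^4 / ((x-a)^3 * (x-a-1)) := by
        field_simp
      linarith [this ▸ hx4]
    calc x^4 * (|Real.exp (-(a/(x-a))) - (1 - a/(x-a) + (a/(x-a))^2/2)| / (x-a-1))
        ≤ x^4 * ((2/9 * (|a|/(x-a))^3) / (x-a-1)) := by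
          gcongr
      _ = 2/9 * |a|^3 * (x^4 / ((x-a)^3 * (x-a-1))) := by
          have h2 : x - a ≠ 0 := ne_of_gt (by linarith)
          have h3 : x - a - 1 ≠ 0 := ne_of_gt (by linarith)
          field_simp
      _ ≤ 2/9 * |a|^3 * 2 := by
          gcongr
      _ ≤ (2/9 * |a|^3 * 2) * ‖(1:ℝ)‖ := by simp
  -- rational part tends to p2 after multiplying by x^4
  have hW : Tendsto (fun x : ℝ => x^4 *
      ((1 - a/(x-a) + (a/(x-a))^2/2)/(x-a-1) - 1/x - 1/x^2 - c/x^3))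
      atTop (𝓝 p2) := by
    have hpoly : Tendsto (fun x : ℝ => p2 + p1/x + p0/x^2) atTop (𝓝 p2) := by
      have h1 : Tendsto (fun x : ℝ => p1 / x) atTop (𝓝 0) :=
        Tendsto.div_atTop tendsto_const_nhds tendsto_id
      have h2 : Tendsto (fun x : ℝ => p0 / x^2) atTop (𝓝 0) :=
        Tendsto.div_atTop tendsto_const_nhds (tendsto_pow_atTop (by norm_num))
      simpa using (tendsto_const_nhds.add h1).add h2
    have hmul := (hpoly.mul hrat2)
    rw [mul_one] at hmul
    refine hmul.congr' ?_
    filter_upwards [eventually_gt_atTop 0, eventually_gt_atTop (a + 2)] with x hx hx2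
    have h1 : x ≠ 0 := hx.ne'
    have h2 : x - a ≠ 0 := ne_of_gt (by linarith)
    have h3 : x - a - 1 ≠ 0 := ne_of_gt (by linarith)
    rw [hc, hp2, hp1, hp0]
    field_simp
    ring
  have hg : (fun x : ℝ => x^4 * (Real.exp (-(a / (x - a))) / (x - a - 1)
      - 1 / x - 1 / x ^ 2 - c / x ^ 3)) =O[atTop] (fun _ : ℝ => (1:ℝ)) := by
    have h2 := hA.add (hW.isBigO_one ℝ)
    refine h2.congr' ?_ EventuallyEq.rfl
    filter_upwards with x
    ring
  -- conclude
  have heq : (fun x : ℝ => Real.exp (-(a / (x - a))) / (x - a - 1)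
        - 1 / x - 1 / x ^ 2 - c / x ^ 3)
      =ᶠ[atTop] (fun x : ℝ => (1/x^4) * (x^4 * (Real.exp (-(a / (x - a))) / (x - a - 1)
        - 1 / x - 1 / x ^ 2 - c / x ^ 3))) := by
    filter_upwards [eventually_gt_atTop 0] with x hx
    field_simp
  refine (IsBigO.congr' ?_ heq.symm (EventuallyEq.refl _ _))
  have := (isBigO_refl (fun x : ℝ => 1/x^4) atTop).mul hg
  simpa using this

/-- the counting function `L(N) = e·α(N)·∫_2^N x^{−α(N)} dx`, with
`α(N) = 1/(log N − a)`, admits the asymptotic expansion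
`L(N) = N/log N + N/log²N + (1 + a − a²/2)·N/log³N + O(N/log⁴N)` as `N → ∞`. -/
theorem L_asymptotic_expansion (a : ℝ) :
    (fun N : ℝ =>
        (Real.exp 1 * (1 / (Real.log N - a)) *
            ∫ x in (2 : ℝ)..N, x ^ (-(1 / (Real.log N - a)))) -
          N / Real.log N - N / (Real.log N) ^ 2 -
          (1 + a - a ^ 2 / 2) * N / (Real.log N) ^ 3) =O[atTop]
      (fun N : ℝ => N / (Real.log N) ^ 4) := by
  set c : ℝ := 1 + a - a ^ 2 / 2 with hc
  have hlog : Tendsto Real.log atTop atTop := Real.tendsto_log_atTop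
  -- main composed big-O
  have h1 := (key_bigO a).comp_tendsto hlog
  have h2 := (isBigO_refl (fun N : ℝ => N) atTop).mul h1
  -- B : boundary term
  set B : ℝ → ℝ := fun N => Real.exp 1 * (1 / (Real.log N - a)) *
      ((2:ℝ) ^ (-(1 / (Real.log N - a)) + 1)) / (-(1 / (Real.log N - a)) + 1) with hB
  have halpha : Tendsto (fun N : ℝ => 1 / (Real.log N - a)) atTop (𝓝 0) := by
    have h := (tendsto_atTop_add_const_right atTop (-a) hlog).inv_tendsto_atTop
    simpa [one_div, sub_eq_add_neg, Pi.inv_def] using h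
  have hexp1 : Tendsto (fun N : ℝ => -(1 / (Real.log N - a)) + 1) atTop (𝓝 1) := by
    simpa using (halpha.neg).add tendsto_const_nhds
  have h2pow : Tendsto (fun N : ℝ => (2:ℝ) ^ (-(1 / (Real.log N - a)) + 1)) atTop
      (𝓝 2) := by
    have hcont : ContinuousAt (fun y : ℝ => (2:ℝ) ^ y) (1:ℝ) :=
      Real.continuousAt_const_rpow (by norm_num : (2:ℝ) ≠ 0)
    have := hcont.tendsto.comp hexp1
    simpa [Function.comp_def, Real.rpow_one] using this
  have hB0 : Tendsto B atTop (𝓝 0) := by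
    have hnum : Tendsto (fun N : ℝ => Real.exp 1 * (1 / (Real.log N - a)) *
        ((2:ℝ) ^ (-(1 / (Real.log N - a)) + 1))) atTop (𝓝 0) := by
      have := ((tendsto_const_nhds (x := Real.exp 1)).mul halpha).mul h2pow
      simpa using this
    have := hnum.div hexp1 one_ne_zero
    simpa [hB, Pi.div_def] using this
  have hBO : B =O[atTop] (fun _ : ℝ => (1:ℝ)) := hB0.isBigO_one ℝ
  have hT : Tendsto (fun N : ℝ => N / (Real.log N) ^ 4) atTop atTop := by
    have h := (Real.tendsto_exp_div_pow_atTop 4).comp hlog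
    refine h.congr' ?_
    filter_upwards [eventually_gt_atTop 0] with N hN
    simp [Function.comp, Real.exp_log hN]
  have h1O : (fun _ : ℝ => (1:ℝ)) =O[atTop] (fun N : ℝ => N / (Real.log N) ^ 4) := by
    refine isBigO_iff.2 ⟨1, ?_⟩
    filter_upwards [hT.eventually_ge_atTop 1] with N hN
    simp only [norm_one, Real.norm_eq_abs, one_mul]
    exact le_trans hN (le_abs_self _)
  -- the eventual identity
  have heq : (fun N : ℝ =>
        (Real.exp 1 * (1 / (Real.log N - a)) *
            ∫ x in (2 : ℝ)..N, x ^ (-(1 / (Real.log N - a)))) -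
          N / Real.log N - N / (Real.log N) ^ 2 -
          (1 + a - a ^ 2 / 2) * N / (Real.log N) ^ 3)
      =ᶠ[atTop] (fun N : ℝ =>
        N * (((fun x => Real.exp (-(a / (x - a))) / (x - a - 1)
          - 1 / x - 1 / x ^ 2 - (1 + a - a ^ 2 / 2) / x ^ 3) ∘ Real.log) N) - B N) := by
    filter_upwards [eventually_gt_atTop 1, hlog.eventually (eventually_ge_atTop (a + 2)),
      hlog.eventually (eventually_ge_atTop 1)] with N hN1 hNa hNl
    have hN0 : (0:ℝ) < N := by linarith
    have hxa : (2:ℝ) ≤ Real.log N - a := by linarith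
    have hxa0 : Real.log N - a ≠ 0 := by intro h; rw [h] at hxa; norm_num at hxa
    have hxa10 : Real.log N - a - 1 ≠ 0 := by
      intro h; have : Real.log N - a = 1 := by linarith
      rw [this] at hxa; norm_num at hxa
    have hx0 : Real.log N ≠ 0 := by
      intro h; rw [h] at hNl; norm_num at hNl
    have hlt1 : 1 / (Real.log N - a) < 1 := by
      rw [div_lt_one (by linarith)]; linarith
    have hden : -(1 / (Real.log N - a)) + 1 ≠ 0 := by
      intro h
      have : 1 / (Real.log N - a) = 1 := by linarith
      rw [this] at hlt1; norm_num at hlt1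
    have hint : ∫ x in (2:ℝ)..N, x ^ (-(1 / (Real.log N - a)))
        = (N ^ (-(1 / (Real.log N - a)) + 1) - 2 ^ (-(1 / (Real.log N - a)) + 1))
            / (-(1 / (Real.log N - a)) + 1) := by
      refine integral_rpow (Or.inl ?_)
      have : 0 < 1 / (Real.log N - a) := by positivity
      linarith
    have hNpow : N ^ (-(1 / (Real.log N - a)) + 1)
        = N * (Real.exp 1)⁻¹ * Real.exp (-(a / (Real.log N - a))) := by
      have h2 : Real.log N / (Real.log N - a) = 1 + a / (Real.log N - a) := by
        rw [add_div' _ _ _ hxa0, div_eq_div_iff hxa0 hxa0]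
        ring
      rw [Real.rpow_def_of_pos hN0,
        show Real.log N * (-(1 / (Real.log N - a)) + 1)
          = -1 + -(a / (Real.log N - a)) + Real.log N from by
            rw [neg_add_eq_sub, mul_sub, mul_one, mul_one_div, h2]; ring,
        Real.exp_add, Real.exp_add, Real.exp_log hN0, Real.exp_neg]
      ring
    rw [hint, hNpow, hB]
    simp only [Function.comp]
    have hu : Real.exp 1 ≠ 0 := Real.exp_ne_zero 1
    set x := Real.log N with hxdef
    set E := Real.exp (-(a / (x - a))) with hEdef
    set P := (2:ℝ) ^ (-(1 / (x - a)) + 1) with hPdef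
    rw [show -(1 / (x - a)) + 1 = (x - a - 1)/(x - a) from by rw [sub_div, div_self hxa0]; ring]
    field_simp
    ring
  refine IsBigO.congr' ?_ heq.symm EventuallyEq.rfl
  have hrhs : (fun N : ℝ => N * ((fun x : ℝ => 1 / x ^ 4) ∘ Real.log) N)
      = fun N : ℝ => N / (Real.log N) ^ 4 := by
    funext N; simp only [Function.comp, one_div, ← div_eq_mul_inv]
  rw [hrhs] at h2
  exact h2.sub (hBO.trans h1O)
end

section
/- Fix a real number a, let α(N) = 1/(log N − a), L(N) = e·α(N)·∫_2^N x^{−α(N)} dx and Li(N) = ∫_2^N dt/log t. Then the discrepancy between Li and L satisfies (Li(N) − L(N))·(log N)³/N → 1 − a + a²/2 as N → ∞; in particular, for a = 1 this limit equals 1/2. -/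
open Real Filter Topology

private lemma hasDerivP {x : ℝ} (hx : 2 ≤ x) :
    HasDerivAt (fun y => y / Real.log y + y / (Real.log y)^2 + 2*y / (Real.log y)^3)
      (1 / Real.log x - 6 / (Real.log x)^4) x := by
  have hx0 : (0:ℝ) < x := by linarith
  have hlx : 0 < Real.log x := Real.log_pos (by linarith)
  have hne : Real.log x ≠ 0 := ne_of_gt hlx
  have hl : HasDerivAt Real.log x⁻¹ x := Real.hasDerivAt_log (ne_of_gt hx0)
  have h1 : HasDerivAt (fun y => y / Real.log y)
      ((1 * Real.log x - x * x⁻¹) / (Real.log x)^2) x :=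
    (hasDerivAt_id x).div hl hne
  have hl2 : HasDerivAt (fun y => (Real.log y)^2) (2 * Real.log x ^ 1 * x⁻¹) x := by
    simpa using (hl.fun_pow 2)
  have h2 : HasDerivAt (fun y => y / (Real.log y)^2)
      ((1 * (Real.log x)^2 - x * (2 * Real.log x ^ 1 * x⁻¹)) / ((Real.log x)^2)^2) x :=
    (hasDerivAt_id x).div hl2 (pow_ne_zero 2 hne)
  have hl3 : HasDerivAt (fun y => (Real.log y)^3) (3 * Real.log x ^ 2 * x⁻¹) x := by
    simpa using (hl.fun_pow 3)
  have h3 : HasDerivAt (fun y => (2*y) / (Real.log y)^3)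
      ((2 * (Real.log x)^3 - (2*x) * (3 * Real.log x ^ 2 * x⁻¹)) / ((Real.log x)^3)^2) x := by
    have := ((hasDerivAt_id x).const_mul (2:ℝ)).fun_div hl3 (pow_ne_zero 3 hne)
    simpa [mul_comm] using this
  have := (h1.fun_add h2).fun_add h3
  refine this.congr_deriv ?_
  field_simp
  ring

private lemma li_identity {N : ℝ} (hN : 2 ≤ N) :
    ∫ t in (2:ℝ)..N, 1 / Real.log t
      = (N / Real.log N + N / (Real.log N)^2 + 2*N / (Real.log N)^3)
        - (2 / Real.log 2 + 2 / (Real.log 2)^2 + 4 / (Real.log 2)^3)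
        + ∫ t in (2:ℝ)..N, 6 / (Real.log t)^4 := by
  have huIcc : Set.uIcc (2:ℝ) N = Set.Icc 2 N := Set.uIcc_of_le hN
  have hlogpos : ∀ x ∈ Set.uIcc (2:ℝ) N, Real.log x ≠ 0 := by
    intro x hx
    rw [huIcc] at hx
    exact ne_of_gt (Real.log_pos (by linarith [hx.1]))
  have hcont1 : ContinuousOn (fun t => 1 / Real.log t) (Set.uIcc (2:ℝ) N) := by
    apply ContinuousOn.div continuousOn_const
    · exact Real.continuousOn_log.mono (by rw [huIcc]; intro x hx; exact ne_of_gt (by linarith [hx.1]))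
    · exact hlogpos
  have hcont2 : ContinuousOn (fun t => 6 / (Real.log t)^4) (Set.uIcc (2:ℝ) N) := by
    apply ContinuousOn.div continuousOn_const
    · exact (Real.continuousOn_log.mono (by rw [huIcc]; intro x hx; exact ne_of_gt (by linarith [hx.1]))).pow 4
    · intro x hx; exact pow_ne_zero 4 (hlogpos x hx)
  have hint1 := hcont1.intervalIntegrable (μ := MeasureTheory.volume)
  have hint2 := hcont2.intervalIntegrable (μ := MeasureTheory.volume)
  have hftc : ∫ t in (2:ℝ)..N, (1 / Real.log t - 6 / (Real.log t)^4)
      = (N / Real.log N + N / (Real.log N)^2 + 2*N / (Real.log N)^3)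
        - (2 / Real.log 2 + 2 / (Real.log 2)^2 + 2*2 / (Real.log 2)^3) := by
    apply intervalIntegral.integral_eq_sub_of_hasDerivAt
    · intro x hx
      rw [huIcc] at hx
      exact hasDerivP hx.1
    · exact hint1.sub hint2
  rw [intervalIntegral.integral_sub hint1 hint2] at hftc
  have h4 : (4:ℝ) / (Real.log 2)^3 = 2*2 / (Real.log 2)^3 := by norm_num
  rw [h4]
  linarith

private lemma cont6 {u v : ℝ} (h : ∀ x ∈ Set.uIcc u v, (2:ℝ) ≤ x) :
    ContinuousOn (fun t => 6 / (Real.log t)^4) (Set.uIcc u v) := by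
  apply ContinuousOn.div continuousOn_const
  · exact (Real.continuousOn_log.mono (fun x hx => ne_of_gt (by linarith [h x hx]))).pow 4
  · intro x hx
    exact pow_ne_zero 4 (ne_of_gt (Real.log_pos (by linarith [h x hx])))

private lemma J_bound {N : ℝ} (hN : 4 ≤ N) :
    ∫ t in (2:ℝ)..N, 6 / (Real.log t)^4
      ≤ 6 / (Real.log 2)^4 * Real.sqrt N + 96 * N / (Real.log N)^4 := by
  have hs2 : (2:ℝ) ≤ Real.sqrt N := by
    rw [show (2:ℝ) = Real.sqrt 4 by rw [show (4:ℝ) = 2^2 by norm_num, Real.sqrt_sq]; norm_num]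
    exact Real.sqrt_le_sqrt hN
  have hsN : Real.sqrt N ≤ N := by
    nlinarith [Real.sq_sqrt (by linarith : (0:ℝ) ≤ N), Real.sqrt_nonneg N]
  have huIcc1 : Set.uIcc (2:ℝ) (Real.sqrt N) = Set.Icc 2 (Real.sqrt N) := Set.uIcc_of_le hs2
  have huIcc2 : Set.uIcc (Real.sqrt N) N = Set.Icc (Real.sqrt N) N := Set.uIcc_of_le hsN
  have hc1 : ContinuousOn (fun t => 6 / (Real.log t)^4) (Set.uIcc (2:ℝ) (Real.sqrt N)) :=
    cont6 (by rw [huIcc1]; exact fun x hx => hx.1)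
  have hc2 : ContinuousOn (fun t => 6 / (Real.log t)^4) (Set.uIcc (Real.sqrt N) N) :=
    cont6 (by rw [huIcc2]; intro x hx; linarith [hx.1])
  have hi1 := hc1.intervalIntegrable (μ := MeasureTheory.volume)
  have hi2 := hc2.intervalIntegrable (μ := MeasureTheory.volume)
  rw [← intervalIntegral.integral_add_adjacent_intervals hi1 hi2]
  have hlog2 : (0:ℝ) < Real.log 2 := Real.log_pos (by norm_num)
  have hlogN : (0:ℝ) < Real.log N := Real.log_pos (by linarith)
  have hlogs : Real.log (Real.sqrt N) = Real.log N / 2 := Real.log_sqrt (by linarith)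
  have b1 : ∫ t in (2:ℝ)..(Real.sqrt N), 6 / (Real.log t)^4
      ≤ (Real.sqrt N - 2) * 6 / (Real.log 2)^4 := by
    have := intervalIntegral.integral_mono_on hs2 hi1
      (intervalIntegrable_const (c := 6 / (Real.log 2)^4)) (fun x hx => by
        have hx2 : (2:ℝ) ≤ x := hx.1
        have h1 : Real.log 2 ≤ Real.log x := Real.log_le_log (by norm_num) hx2
        have h2 : (Real.log 2)^4 ≤ (Real.log x)^4 := pow_le_pow_left₀ hlog2.le h1 4
        apply div_le_div_of_nonneg_left (by norm_num) (by positivity) h2)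
    simpa using this
  have b2 : ∫ t in (Real.sqrt N)..N, 6 / (Real.log t)^4
      ≤ (N - Real.sqrt N) * 96 / (Real.log N)^4 := by
    have := intervalIntegral.integral_mono_on hsN hi2
      (intervalIntegrable_const (c := 96 / (Real.log N)^4)) (fun x hx => by
        have hx2 : Real.sqrt N ≤ x := hx.1
        have h1 : Real.log (Real.sqrt N) ≤ Real.log x := Real.log_le_log (by linarith) hx2
        rw [hlogs] at h1
        have h2 : (Real.log N / 2)^4 ≤ (Real.log x)^4 := pow_le_pow_left₀ (by positivity) h1 4
        have hlx : (0:ℝ) < Real.log x := lt_of_lt_of_le (by positivity) h1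
        rw [div_le_div_iff₀ (by positivity) (by positivity)]
        nlinarith [pow_pos hlx 4])
    simpa using this
  have hsqnn : (0:ℝ) ≤ Real.sqrt N := Real.sqrt_nonneg N
  have e1 : (Real.sqrt N - 2) * 6 / (Real.log 2)^4 ≤ 6 / (Real.log 2)^4 * Real.sqrt N := by
    rw [show 6 / (Real.log 2)^4 * Real.sqrt N = Real.sqrt N * 6 / (Real.log 2)^4 by ring]
    apply div_le_div_of_nonneg_right (by nlinarith) (by positivity)
  have e2 : (N - Real.sqrt N) * 96 / (Real.log N)^4 ≤ 96 * N / (Real.log N)^4 := by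
    apply div_le_div_of_nonneg_right (by nlinarith) (by positivity)
  linarith

private lemma sqrt_tendsto_atTop : Tendsto Real.sqrt atTop atTop := by
  apply (tendsto_rpow_atTop (by norm_num : (0:ℝ) < 1/2)).congr'
  filter_upwards [eventually_ge_atTop (0:ℝ)] with x hx
  exact (Real.sqrt_eq_rpow x).symm

private lemma log_cube_div_sqrt : Tendsto (fun N : ℝ => (Real.log N)^3 / Real.sqrt N) atTop (𝓝 0) := by
  have h := (Real.tendsto_pow_log_div_mul_add_atTop 1 0 3 one_ne_zero).comp sqrt_tendsto_atTop
  have h8 := h.const_mul (8:ℝ)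
  rw [mul_zero] at h8
  apply h8.congr'
  filter_upwards [eventually_ge_atTop (1:ℝ)] with x hx
  have hx0 : (0:ℝ) < x := by linarith
  have hls : Real.log (Real.sqrt x) = Real.log x / 2 := Real.log_sqrt hx0.le
  have hs0 : (0:ℝ) < Real.sqrt x := Real.sqrt_pos.2 hx0
  simp only [Function.comp_apply, hls]
  field_simp
  ring

private lemma inv_log_tendsto : Tendsto (fun N : ℝ => 96 / Real.log N) atTop (𝓝 0) := by
  have := (tendsto_inv_atTop_zero.comp Real.tendsto_log_atTop).const_mul (96:ℝ)
  rw [mul_zero] at this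
  apply this.congr
  intro x
  simp [Function.comp, div_eq_mul_inv]

private lemma T3_tendsto :
    Tendsto (fun N : ℝ => (∫ t in (2:ℝ)..N, 6 / (Real.log t)^4) * (Real.log N)^3 / N)
      atTop (𝓝 0) := by
  have hub : Tendsto (fun N : ℝ => 6 / (Real.log 2)^4 * ((Real.log N)^3 / Real.sqrt N)
      + 96 / Real.log N) atTop (𝓝 0) := by
    have h1 := log_cube_div_sqrt.const_mul (6 / (Real.log 2)^4)
    rw [mul_zero] at h1
    have := h1.add inv_log_tendsto
    rwa [add_zero] at this
  apply tendsto_of_tendsto_of_tendsto_of_le_of_le' tendsto_const_nhds hub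
  · filter_upwards [eventually_ge_atTop (4:ℝ)] with N hN
    have hN0 : (0:ℝ) < N := by linarith
    have hlogN : (0:ℝ) < Real.log N := Real.log_pos (by linarith)
    have hint : (0:ℝ) ≤ ∫ t in (2:ℝ)..N, 6 / (Real.log t)^4 := by
      apply intervalIntegral.integral_nonneg (by linarith : (2:ℝ) ≤ N)
      intro x hx
      have : (0:ℝ) < Real.log x := Real.log_pos (by linarith [hx.1])
      positivity
    positivity
  · filter_upwards [eventually_ge_atTop (4:ℝ)] with N hN
    have hN0 : (0:ℝ) < N := by linarith
    have hlogN : (0:ℝ) < Real.log N := Real.log_pos (by linarith)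
    have hs0 : (0:ℝ) < Real.sqrt N := Real.sqrt_pos.2 hN0
    have hb := J_bound hN
    have hfac : (0:ℝ) ≤ (Real.log N)^3 / N := by positivity
    calc (∫ t in (2:ℝ)..N, 6 / (Real.log t)^4) * (Real.log N)^3 / N
        ≤ (6 / (Real.log 2)^4 * Real.sqrt N + 96 * N / (Real.log N)^4) * (Real.log N)^3 / N := by
          rw [div_le_div_iff₀ (by positivity) (by positivity)]
          apply mul_le_mul_of_nonneg_right (mul_le_mul_of_nonneg_right hb (by positivity)) hN0.le
      _ = (6 / (Real.log 2)^4 * Real.sqrt N) * (Real.log N)^3 / N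
            + (96 * N / (Real.log N)^4) * (Real.log N)^3 / N := by ring
      _ = 6 / (Real.log 2)^4 * ((Real.log N)^3 / Real.sqrt N) + 96 / Real.log N := by
          have hss : Real.sqrt N * Real.sqrt N = N := Real.mul_self_sqrt hN0.le
          have h1' : (6 / (Real.log 2)^4 * Real.sqrt N) * (Real.log N)^3 / N
              = 6 / (Real.log 2)^4 * ((Real.log N)^3 / Real.sqrt N) := by
            field_simp; linear_combination hss
          have h2' : (96 * N / (Real.log N)^4) * (Real.log N)^3 / N = 96 / Real.log N := by
            field_simp
          rw [h1', h2']

private lemma const_mul_log_cube_div (C : ℝ) :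
    Tendsto (fun N : ℝ => C * (Real.log N)^3 / N) atTop (𝓝 0) := by
  have h := (Real.tendsto_pow_log_div_mul_add_atTop 1 0 3 one_ne_zero).const_mul C
  rw [mul_zero] at h
  apply h.congr
  intro x
  simp [mul_div_assoc]

private lemma rho_tendsto (a : ℝ) :
    Tendsto (fun t : ℝ =>
        (Real.exp (-a/(t-a)) - (1 - a/(t-a) + a^2/(2*(t-a)^2))) * t^3/(t-a-1))
      atTop (𝓝 0) := by
  have hg : Tendsto (fun t : ℝ => 32*|a|^3/(9*t)) atTop (𝓝 0) := by
    have := (tendsto_inv_atTop_zero (𝕜 := ℝ)).const_mul (32*|a|^3/9)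
    rw [mul_zero] at this
    apply this.congr
    intro x
    field_simp
  apply squeeze_zero_norm' _ hg
  filter_upwards [eventually_ge_atTop (2*|a| + 2)] with t ht
  have habs := abs_nonneg a
  have haa : -|a| ≤ a := neg_abs_le a
  have haa' : a ≤ |a| := le_abs_self a
  have h2 : t/2 ≤ t - a - 1 := by linarith
  have h2' : t/2 ≤ t - a := by linarith
  have ht0 : (0:ℝ) < t := by linarith
  have hta : (0:ℝ) < t - a := by linarith
  have hta1 : (0:ℝ) < t - a - 1 := by linarith
  set x := -a/(t-a) with hx
  have hxabs : |x| = |a|/(t-a) := by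
    rw [hx, abs_div, abs_neg, abs_of_pos hta]
  have hx1 : |x| ≤ 1 := by
    rw [hxabs, div_le_one hta]; linarith
  have hkey := Real.exp_bound hx1 (by norm_num : 0 < 3)
  have hsum : ∑ m ∈ Finset.range 3, x^m/(Nat.factorial m) = 1 + x + x^2/2 := by
    simp [Finset.sum_range_succ, Nat.factorial]
  rw [hsum] at hkey
  have hq : (1 - a/(t-a) + a^2/(2*(t-a)^2)) = 1 + x + x^2/2 := by
    rw [hx]; field_simp; ring
  have hxb : |x| ≤ 2*|a|/t := by
    rw [hxabs]
    rw [div_le_div_iff₀ hta ht0]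
    nlinarith
  have hnorm : ‖(Real.exp (-a/(t-a)) - (1 - a/(t-a) + a^2/(2*(t-a)^2))) * t^3/(t-a-1)‖
      = |Real.exp x - (1 + x + x^2/2)| * t^3/(t-a-1) := by
    rw [Real.norm_eq_abs, abs_div, abs_mul, abs_of_pos hta1, abs_of_pos (by positivity : (0:ℝ) < t^3), hq, hx]
  rw [hnorm]
  have hb1 : |Real.exp x - (1 + x + x^2/2)| * t^3/(t-a-1)
      ≤ (|x|^3 * (2/9)) * t^3/(t-a-1) := by
    apply div_le_div_of_nonneg_right _ hta1.le
    apply mul_le_mul_of_nonneg_right _ (by positivity)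
    refine hkey.trans (le_of_eq ?_)
    norm_num [Nat.factorial]
  have hb2 : (|x|^3 * (2/9)) * t^3/(t-a-1) ≤ ((2*|a|/t)^3 * (2/9)) * t^3/(t/2) := by
    apply div_le_div₀ (by positivity) _ (by positivity) h2
    apply mul_le_mul_of_nonneg_right _ (by positivity)
    exact mul_le_mul_of_nonneg_right (pow_le_pow_left₀ (abs_nonneg x) hxb 3) (by norm_num)
  have hb3 : ((2*|a|/t)^3 * (2/9)) * t^3/(t/2) = 32*|a|^3/(9*t) := by
    field_simp
    ring
  linarith

private lemma main_exp (a : ℝ) {N t : ℝ} (hN0 : 0 < N) (ht : Real.log N = t)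
    (hta : 2 ≤ t - a) :
    Real.exp 1 * (1/(t-a)) * N ^ (-(1/(t-a))+1) / (-(1/(t-a))+1) * t^3 / N
      = Real.exp (-a/(t-a)) * t^3/(t-a-1) := by
  have hta0 : (0:ℝ) < t - a := by linarith
  have hta1 : (0:ℝ) < t - a - 1 := by linarith
  have hne : t - a ≠ 0 := ne_of_gt hta0
  have hne1 : t - a - 1 ≠ 0 := ne_of_gt hta1
  have hrpow : N ^ (-(1/(t-a))+1) = Real.exp ((-(1/(t-a))+1) * t) := by
    rw [Real.rpow_def_of_pos hN0, ht, mul_comm]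
  have hNe : N = Real.exp t := by rw [← ht, Real.exp_log hN0]
  have hexp : Real.exp 1 * Real.exp ((-(1/(t-a))+1) * t) / Real.exp t
      = Real.exp (-a/(t-a)) := by
    rw [← Real.exp_add, ← Real.exp_sub]
    congr 1
    field_simp
    ring
  rw [hrpow]
  rw [hNe]
  rw [← hexp]
  have hden2 : -(1/(t-a)) + 1 = (t-a-1)/(t-a) := by field_simp; ring
  rw [hden2]
  have hE3 := (Real.exp_pos t).ne'
  generalize Real.exp 1 = u
  generalize Real.exp ((-(1/(t-a))+1) * t) = v
  generalize hw : Real.exp t = w at hE3 ⊢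
  field_simp

private lemma A_tendsto (a : ℝ) :
    Tendsto (fun t : ℝ => t^2 + t + 2
        - (1 - a/(t-a) + a^2/(2*(t-a)^2)) * t^3/(t-a-1))
      atTop (𝓝 (1 - a + a^2/2)) := by
  set c3 := 1 - a + a^2/2 with hc3
  set c2 := -a^3 + 2*a^2 - 4*a - 2 with hc2
  set c1 := -a^3 + 5*a^2 + 4*a with hc1
  set c0 := -2*a^3 - 2*a^2 with hc0
  set d2 := -(3*a+1) with hd2
  set d1 := 3*a^2+2*a with hd1
  set d0 := -a^3 - a^2 with hd0
  have hcont : ContinuousAt (fun s : ℝ =>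
      (c3 + c2*s + c1*s^2 + c0*s^3) / (1 + d2*s + d1*s^2 + d0*s^3)) 0 := by
    apply ContinuousAt.div (by fun_prop) (by fun_prop)
    norm_num
  have hcomp := hcont.tendsto.comp tendsto_inv_atTop_zero
  have hF0 : (c3 + c2*(0:ℝ) + c1*(0:ℝ)^2 + c0*(0:ℝ)^3)
      / (1 + d2*(0:ℝ) + d1*(0:ℝ)^2 + d0*(0:ℝ)^3) = c3 := by norm_num
  rw [hF0] at hcomp
  apply hcomp.congr'
  filter_upwards [eventually_ge_atTop (|a| + |a| + 2)] with t ht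
  have habs := abs_nonneg a
  have h1 : t - a > 1 := by cases' abs_cases a with h h <;> linarith
  have ht0 : t > 0 := by cases' abs_cases a with h h <;> linarith
  have hne0 : t ≠ 0 := ne_of_gt ht0
  have hne1 : t - a ≠ 0 := by intro h; linarith
  have hne2 : t - a - 1 ≠ 0 := by intro h; linarith
  have hQ : (t-a)^2*(t-a-1) ≠ 0 := mul_ne_zero (pow_ne_zero 2 hne1) hne2
  have hden : 1 + d2*t⁻¹ + d1*t⁻¹^2 + d0*t⁻¹^3 = (t-a)^2*(t-a-1)/t^3 := by
    rw [hd2, hd1, hd0]; field_simp; ring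
  have hnum : c3 + c2*t⁻¹ + c1*t⁻¹^2 + c0*t⁻¹^3
      = (c3*t^3 + c2*t^2 + c1*t + c0)/t^3 := by
    field_simp
  simp only [Function.comp_apply]
  rw [hnum, hden, div_div_div_comm, div_self (pow_ne_zero 3 hne0), div_one,
    hc3, hc2, hc1, hc0]
  field_simp
  ring

private lemma T5_tendsto (a : ℝ) :
    Tendsto (fun N : ℝ => Real.exp 1 * (1/(Real.log N - a))
        * (2:ℝ) ^ (-(1/(Real.log N - a))+1) / (-(1/(Real.log N - a))+1)
        * (Real.log N)^3 / N) atTop (𝓝 0) := by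
  apply squeeze_zero_norm' _ (const_mul_log_cube_div (4*Real.exp 1))
  filter_upwards [eventually_ge_atTop (3:ℝ),
    Real.tendsto_log_atTop.eventually_ge_atTop (a+2)] with N hN3 hlga
  have hN0 : (0:ℝ) < N := by linarith
  have ht1 : (1:ℝ) ≤ Real.log N := by
    calc (1:ℝ) ≤ Real.log 3 := by
          rw [show (1:ℝ) = Real.log (Real.exp 1) by rw [Real.log_exp]]
          exact Real.log_le_log (Real.exp_pos 1) (by linarith [Real.exp_one_lt_d9])
      _ ≤ Real.log N := Real.log_le_log (by norm_num) hN3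
  set t := Real.log N with htdef
  have hta : (2:ℝ) ≤ t - a := by linarith
  have hα0 : (0:ℝ) < 1/(t-a) := by positivity
  have hα : 1/(t-a) ≤ 1/2 := by
    rw [div_le_div_iff₀ (by linarith) (by norm_num)]; linarith
  have hB0 : (0:ℝ) < (2:ℝ) ^ (-(1/(t-a))+1) := Real.rpow_pos_of_pos (by norm_num) _
  have hB : (2:ℝ) ^ (-(1/(t-a))+1) ≤ 2 := by
    calc (2:ℝ) ^ (-(1/(t-a))+1) ≤ (2:ℝ) ^ (1:ℝ) :=
          Real.rpow_le_rpow_of_exponent_le one_le_two (by linarith)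
      _ = 2 := Real.rpow_one 2
  have hden : (1:ℝ)/2 ≤ -(1/(t-a))+1 := by linarith
  have hpos : (0:ℝ) ≤ Real.exp 1 * (1/(t-a)) * (2:ℝ) ^ (-(1/(t-a))+1) / (-(1/(t-a))+1)
      * t^3 / N := by positivity
  rw [Real.norm_eq_abs, abs_of_nonneg hpos]
  have hfac : Real.exp 1 * (1/(t-a)) * (2:ℝ) ^ (-(1/(t-a))+1) / (-(1/(t-a))+1)
      ≤ 4 * Real.exp 1 := by
    have hab : (1/(t-a)) * (2:ℝ) ^ (-(1/(t-a))+1) ≤ 1 := by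
      have := mul_le_mul hα hB hB0.le (by norm_num : (0:ℝ) ≤ 1/2)
      linarith
    have h1 : Real.exp 1 * (1/(t-a)) * (2:ℝ) ^ (-(1/(t-a))+1) ≤ Real.exp 1 := by
      calc Real.exp 1 * (1/(t-a)) * (2:ℝ) ^ (-(1/(t-a))+1)
          = Real.exp 1 * ((1/(t-a)) * (2:ℝ) ^ (-(1/(t-a))+1)) := by ring
        _ ≤ Real.exp 1 * 1 := mul_le_mul_of_nonneg_left hab (Real.exp_pos 1).le
        _ = Real.exp 1 := mul_one _
    calc Real.exp 1 * (1/(t-a)) * (2:ℝ) ^ (-(1/(t-a))+1) / (-(1/(t-a))+1)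
        ≤ Real.exp 1 / (1/2) := div_le_div₀ (Real.exp_pos 1).le h1 (by norm_num) hden
      _ ≤ 4 * Real.exp 1 := by rw [div_div_eq_mul_div]; nlinarith [Real.exp_pos 1]
  calc Real.exp 1 * (1/(t-a)) * (2:ℝ) ^ (-(1/(t-a))+1) / (-(1/(t-a))+1) * t^3 / N
      ≤ 4 * Real.exp 1 * t^3 / N := by
        apply div_le_div_of_nonneg_right _ hN0.le
        exact mul_le_mul_of_nonneg_right hfac (by positivity)
    _ = 4 * Real.exp 1 * t^3 / N := rfl

/-- with `α(N) = 1/(log N − a)`, `L(N) = e·α(N)·∫_2^N x^{−α(N)} dx` and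
`Li(N) = ∫_2^N dt/log t`, the discrepancy satisfies
`(Li(N) − L(N))·log³N / N → 1 − a + a²/2` as `N → ∞`; in particular for `a = 1` the limit
is `1/2`. -/
theorem Li_sub_L_limit (a : ℝ) :
    Tendsto (fun N : ℝ =>
        ((∫ t in (2 : ℝ)..N, 1 / Real.log t) -
            Real.exp 1 * (1 / (Real.log N - a)) *
              ∫ x in (2 : ℝ)..N, x ^ (-(1 / (Real.log N - a)))) *
          (Real.log N) ^ 3 / N)
      atTop (𝓝 (1 - a + a ^ 2 / 2)) ∧
    (a = 1 →
      Tendsto (fun N : ℝ =>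
          ((∫ t in (2 : ℝ)..N, 1 / Real.log t) -
              Real.exp 1 * (1 / (Real.log N - a)) *
                ∫ x in (2 : ℝ)..N, x ^ (-(1 / (Real.log N - a)))) *
            (Real.log N) ^ 3 / N)
        atTop (𝓝 (1 / 2))) := by
  have hmain : Tendsto (fun N : ℝ =>
        ((∫ t in (2 : ℝ)..N, 1 / Real.log t) -
            Real.exp 1 * (1 / (Real.log N - a)) *
              ∫ x in (2 : ℝ)..N, x ^ (-(1 / (Real.log N - a)))) *
          (Real.log N) ^ 3 / N)
      atTop (𝓝 (1 - a + a ^ 2 / 2)) := by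
    have hA := (A_tendsto a).comp Real.tendsto_log_atTop
    have hρ := ((rho_tendsto a).comp Real.tendsto_log_atTop).neg
    rw [neg_zero] at hρ
    have hT2 := const_mul_log_cube_div
      (-(2 / Real.log 2 + 2 / (Real.log 2)^2 + 4 / (Real.log 2)^3))
    have hT3 := T3_tendsto
    have hT5 := T5_tendsto a
    have hsum := (((hA.add hρ).add hT2).add hT3).add hT5
    rw [add_zero, add_zero, add_zero, add_zero] at hsum
    have hfinal : (1 - a + a^2/2 : ℝ) = 1 - a + a ^ 2 / 2 := by norm_num
    apply hsum.congr'
    filter_upwards [eventually_ge_atTop (4:ℝ),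
      Real.tendsto_log_atTop.eventually_ge_atTop (|a| + |a| + 4)] with N hN4 hlga
    have habs := abs_nonneg a
    have haa : -|a| ≤ a := neg_abs_le a
    have haa' : a ≤ |a| := le_abs_self a
    have hN0 : (0:ℝ) < N := by linarith
    set t := Real.log N with htdef
    have ht4 : (4:ℝ) ≤ t := by linarith
    have hta : (2:ℝ) ≤ t - a := by linarith
    have htne : t ≠ 0 := by intro h; rw [h] at ht4; norm_num at ht4
    have hNne : N ≠ 0 := ne_of_gt hN0
    have hα1 : (-1:ℝ) < -(1/(t-a)) := by
      have : (0:ℝ) < 1/(t-a) := by positivity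
      have h2 : 1/(t-a) ≤ 1/2 := by
        rw [div_le_div_iff₀ (by linarith) (by norm_num)]; linarith
      linarith
    have hm := main_exp a hN0 htdef.symm hta
    have hPN : (N / t + N / t^2 + 2*N / t^3) * t^3 / N = t^2 + t + 2 := by
      field_simp
    simp only [Function.comp_apply]
    rw [li_identity (by linarith : (2:ℝ) ≤ N), integral_rpow (Or.inl hα1)]
    rw [← htdef]
    linear_combination hm - hPN
  refine ⟨hmain, fun ha => ?_⟩
  subst ha
  have : (1:ℝ) - 1 + 1 ^ 2 / 2 = 1/2 := by norm_num
  rwa [this] at hmain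
end

section
/- Fix a real number a and define, for large real N, the exponent β(N) = 1/(log(N/(2π)) − a) and the power-law approximation S(N) = (1/(2π·e·β(N)))·∫_2^N (x/(2π))^{β(N)} dx. Then S(N) is asymptotic to the main term of the Riemann zeros counting function: S(N) / ((N/(2π))·log(N/(2π))) → 1 as N → ∞. -/
open Real Filter Topology

/-- with `β(N) = 1/(log(N/(2π)) − a)`, the power-law approximation
`S(N) = (1/(2π·e·β(N)))·∫_2^N (x/(2π))^{β(N)} dx` is asymptotic to the main term of the
Riemann zeros counting function: `S(N)/((N/(2π))·log(N/(2π))) → 1` as `N → ∞`. -/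
theorem zeros_powerlaw_asymptotic (a : ℝ) :
    Tendsto (fun N : ℝ =>
        ((1 / (2 * π * Real.exp 1 * (1 / (Real.log (N / (2 * π)) - a)))) *
            ∫ x in (2 : ℝ)..N, (x / (2 * π)) ^ (1 / (Real.log (N / (2 * π)) - a))) /
          ((N / (2 * π)) * Real.log (N / (2 * π))))
      atTop (𝓝 1) := by
  have hπ : (0:ℝ) < π := Real.pi_pos
  have hc : (0:ℝ) < 2 * π := by positivity
  set β : ℝ → ℝ := fun N => 1 / (Real.log (N / (2 * π)) - a) with hβdef
  -- log(N/(2π)) → ∞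
  have hL : Tendsto (fun N : ℝ => Real.log (N / (2 * π))) atTop atTop :=
    Real.tendsto_log_atTop.comp (tendsto_id.atTop_div_const hc)
  have hLa : Tendsto (fun N : ℝ => Real.log (N / (2 * π)) - a) atTop atTop :=
    tendsto_atTop_add_const_right _ (-a) hL
  -- β → 0
  have hβ : Tendsto β atTop (𝓝 0) := by
    rw [hβdef]
    simp only [one_div]
    exact hLa.inv_tendsto_atTop
  have T1 : Tendsto (fun N => Real.exp (a * β N)) atTop (𝓝 (Real.exp (a * 0))) :=
    (Real.continuous_exp.tendsto _).comp (hβ.const_mul a)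
  rw [mul_zero, Real.exp_zero] at T1
  have T2 : Tendsto (fun N => 1 + a * β N) atTop (𝓝 (1 + a * 0)) :=
    (hβ.const_mul a).const_add 1
  rw [mul_zero, add_zero] at T2
  have T3 : Tendsto (fun N => 1 + β N) atTop (𝓝 (1 + 0)) := hβ.const_add 1
  rw [add_zero] at T3
  have h1π : (0:ℝ) < 1 / π := by positivity
  have T4 : Tendsto (fun N => (1 / π : ℝ) ^ (β N)) atTop (𝓝 1) := by
    have h : Tendsto (fun N => Real.exp (Real.log (1 / π) * β N)) atTop
        (𝓝 (Real.exp (Real.log (1 / π) * 0))) :=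
      (Real.continuous_exp.tendsto _).comp (hβ.const_mul (Real.log (1 / π)))
    rw [mul_zero, Real.exp_zero] at h
    exact h.congr (fun N => (Real.rpow_def_of_pos h1π (β N)).symm)
  have T5 : Tendsto (fun N : ℝ => (2 : ℝ) / N) atTop (𝓝 0) :=
    Tendsto.div_atTop tendsto_const_nhds tendsto_id
  have hnum : Tendsto (fun N => Real.exp (a * β N) / ((1 + a * β N) * (1 + β N)))
      atTop (𝓝 (1 / (1 * 1))) := T1.div (T2.mul T3) (by norm_num)
  rw [(by norm_num : (1:ℝ) / (1 * 1) = 1)] at hnum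
  have hsmall : Tendsto
      (fun N => (1 / π : ℝ) ^ (β N) * (2 / N) / (Real.exp 1 * ((1 + a * β N) * (1 + β N))))
      atTop (𝓝 (1 * 0 / (Real.exp 1 * (1 * 1)))) :=
    (T4.mul T5).div
      ((tendsto_const_nhds : Tendsto (fun _ : ℝ => Real.exp 1) atTop _).mul (T2.mul T3))
      (by positivity)
  rw [(by norm_num : (1:ℝ) * 0 / (Real.exp 1 * (1 * 1)) = 0)] at hsmall
  have hG : Tendsto
      (fun N => Real.exp (a * β N) / ((1 + a * β N) * (1 + β N)) -
        (1 / π : ℝ) ^ (β N) * (2 / N) / (Real.exp 1 * ((1 + a * β N) * (1 + β N))))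
      atTop (𝓝 (1 - 0)) := hnum.sub hsmall
  rw [sub_zero] at hG
  refine hG.congr' ?_
  -- eventual equality
  filter_upwards [eventually_ge_atTop (2:ℝ), hL.eventually_ge_atTop (a + 1),
    hL.eventually_ge_atTop 1] with N hN2 hlge hl1
  set l : ℝ := Real.log (N / (2 * π)) with hldef
  have hN0 : (0:ℝ) < N := by linarith
  have hla1 : (1:ℝ) ≤ l - a := by linarith
  have hl1' : (1:ℝ) ≤ l := hl1
  have hla0 : l - a ≠ 0 := by linarith
  have hb0 : 0 < β N := by
    have : β N = 1 / (l - a) := by rw [hβdef]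
    rw [this]
    positivity
  have hbl : β N * l = 1 + a * β N := by
    have h1 : β N * (l - a) = 1 := by
      have : β N = 1 / (l - a) := by rw [hβdef]
      rw [this]
      field_simp
    nlinarith
  have h1ab : 0 < 1 + a * β N := by
    nlinarith
  -- compute the integral
  have hint : (∫ x in (2:ℝ)..N, (x / (2 * π)) ^ (β N))
      = ((N ^ (β N + 1) - 2 ^ (β N + 1)) / (β N + 1)) / (2 * π) ^ (β N) := by
    have hcong : ∀ x ∈ Set.uIcc (2:ℝ) N, (x / (2 * π)) ^ (β N) = x ^ (β N) / (2 * π) ^ (β N) := by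
      intro x hx
      rw [Set.uIcc_of_le hN2] at hx
      exact Real.div_rpow (by linarith [hx.1]) hc.le _
    rw [intervalIntegral.integral_congr hcong, intervalIntegral.integral_div,
      integral_rpow (Or.inl (by linarith : (-1:ℝ) < β N))]
  -- rpow identities
  have hNpow : N ^ (β N + 1) = (2 * π) ^ (β N) * Real.exp 1 * Real.exp (a * β N) * N := by
    have hNc : (0:ℝ) < N / (2 * π) := by positivity
    have e1 : N ^ (β N + 1) = N ^ (β N) * N := Real.rpow_add_one hN0.ne' _
    have e2 : (N / (2 * π)) ^ (β N) = N ^ (β N) / (2 * π) ^ (β N) :=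
      Real.div_rpow hN0.le hc.le _
    have e3 : (N / (2 * π)) ^ (β N) = Real.exp (l * β N) := Real.rpow_def_of_pos hNc _
    have e4 : Real.exp (l * β N) = Real.exp 1 * Real.exp (a * β N) := by
      rw [← Real.exp_add]
      congr 1
      rw [mul_comm] at hbl
      linarith [hbl]
    have hcpos : (0:ℝ) < (2 * π) ^ (β N) := Real.rpow_pos_of_pos hc _
    rw [e1]
    have hNb : N ^ (β N) = (2 * π) ^ (β N) * (Real.exp 1 * Real.exp (a * β N)) := by
      rw [← e4, ← e3, e2]
      field_simp
    rw [hNb]; ring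
  have h2pow : (2:ℝ) ^ (β N + 1) = (2 * π) ^ (β N) * (1 / π) ^ (β N) * 2 := by
    have e1 : (2:ℝ) ^ (β N + 1) = 2 ^ (β N) * 2 := Real.rpow_add_one two_ne_zero _
    have e2 : ((2 * π) * (1 / π)) ^ (β N) = (2 * π) ^ (β N) * (1 / π) ^ (β N) :=
      Real.mul_rpow hc.le (by positivity)
    have e3 : (2 * π) * (1 / π) = 2 := by field_simp
    rw [e1, ← e2, e3]
  -- now pure algebra
  have hl0 : (0:ℝ) < l := by linarith
  have hcpos : (0:ℝ) < (2 * π) ^ (β N) := Real.rpow_pos_of_pos hc _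
  have hleq : l = (1 + a * β N) / β N := by
    field_simp
    linarith [hbl]
  have he : (0:ℝ) < Real.exp 1 := Real.exp_pos 1
  have hb1 : (0:ℝ) < β N + 1 := by linarith
  show _ = (1 / (2 * π * Real.exp 1 * β N) * ∫ x in (2:ℝ)..N, (x / (2 * π)) ^ (β N)) /
      (N / (2 * π) * l)
  rw [hint, hNpow, h2pow, hleq]
  field_simp
  ring
end
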